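/- Let Θ* ∈ ℝ^{(n+m)×n} have rank r ≥ 1 and let X = ZΘ* for a matrix Z ∈ ℝ^{N×(n+m)}. Set s := 1 if K₁ = K₂ and s := ⌊(K₂/K₁)²⌋ + 1 if K₁ < K₂. If Z satisfies the weak RIP of order (2+3s)r with some constant δ < 5 − 2√6 and constants K₂ ≥ K₁ > 0, then any matrix Θ̂ ∈ ℝ^{(n+m)×n} with ZΘ̂ = X and ‖Θ̂‖_nuc ≤ ‖Θ*‖_nuc satisfies Θ̂ = Θ*; in particular every minimizer of the nuclear norm subject to ZΘ = X equals Θ*. -/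

import Mathlib

open MeasureTheory ProbabilityTheory Matrix Real

/-- Frobenius norm of a real matrix. -/
noncomputable def frobNorm {p q : ℕ} (A : Matrix (Fin p) (Fin q) ℝ) : ℝ :=
  Real.sqrt (∑ i, ∑ j, (A i j) ^ 2)

/-- Singular values of a real matrix: square roots of the eigenvalues of Aᵀ * A. -/
noncomputable def svals {p q : ℕ} (A : Matrix (Fin p) (Fin q) ℝ) (j : Fin q) : ℝ :=
  Real.sqrt ((Matrix.isHermitian_conjTranspose_mul_self A).eigenvalues j)

/-- Operator (spectral) norm: the largest singular value. -/
noncomputable def opNorm {p q : ℕ} (A : Matrix (Fin p) (Fin q) ℝ) : ℝ := ⨆ j, svals A j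

/-- Nuclear norm: the sum of the singular values. -/
noncomputable def nucNorm {p q : ℕ} (A : Matrix (Fin p) (Fin q) ℝ) : ℝ := ∑ j, svals A j

/-- Weak restricted isometry property of order `r` with constant `δ` and constants `K₁ ≤ K₂`,
for matrices `Δ ∈ ℝ^{d × n}` of rank at most `r`. -/
def WeakRIP {N d : ℕ} (Z : Matrix (Fin N) (Fin d) ℝ) (n r : ℕ) (δ K₁ K₂ : ℝ) : Prop :=
  ∀ Δ : Matrix (Fin d) (Fin n) ℝ, Δ.rank ≤ r →
    K₁ * (1 - δ) * frobNorm Δ ≤ frobNorm (Z * Δ) / Real.sqrt N ∧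
    frobNorm (Z * Δ) / Real.sqrt N ≤ K₂ * (1 + δ) * frobNorm Δ

namespace ER
open Finset

variable {p q d e : ℕ}

/-! ### Spectral toolkit -/

noncomputable def lam (A : Matrix (Fin p) (Fin q) ℝ) : Fin q → ℝ :=
  (Matrix.isHermitian_conjTranspose_mul_self A).eigenvalues

noncomputable def ev (A : Matrix (Fin p) (Fin q) ℝ) (i : Fin q) : Fin q → ℝ :=
  ⇑((Matrix.isHermitian_conjTranspose_mul_self A).eigenvectorBasis i)

noncomputable def uv (A : Matrix (Fin p) (Fin q) ℝ) (i : Fin q) : Fin p → ℝ :=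
  A *ᵥ ev A i

lemma lam_nonneg (A : Matrix (Fin p) (Fin q) ℝ) (i : Fin q) : 0 ≤ lam A i :=
  Matrix.eigenvalues_conjTranspose_mul_self_nonneg A i

lemma gram_mulVec (A : Matrix (Fin p) (Fin q) ℝ) (i : Fin q) :
    (Aᴴ * A) *ᵥ ev A i = lam A i • ev A i :=
  (Matrix.isHermitian_conjTranspose_mul_self A).mulVec_eigenvectorBasis i

lemma ev_dot (A : Matrix (Fin p) (Fin q) ℝ) (i j : Fin q) :
    ev A i ⬝ᵥ ev A j = if i = j then 1 else 0 := by
  have h := orthonormal_iff_ite.mp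
    ((Matrix.isHermitian_conjTranspose_mul_self A).eigenvectorBasis.orthonormal) i j
  simpa [ev, PiLp.inner_apply, dotProduct, RCLike.inner_apply, mul_comm] using h

lemma ev_complete (A : Matrix (Fin p) (Fin q) ℝ) (b c : Fin q) :
    ∑ i, ev A i b * ev A i c = if b = c then 1 else 0 := by
  classical
  set V : Matrix (Fin q) (Fin q) ℝ := Matrix.of (fun i j => ev A i j) with hV
  have h1 : V * Vᵀ = 1 := by
    ext i j
    simpa [hV, Matrix.mul_apply, dotProduct, Matrix.one_apply] using ev_dot A i j
  have h2 : Vᵀ * V = 1 := mul_eq_one_comm.mp h1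
  have := congrFun (congrFun h2 b) c
  simpa [hV, Matrix.mul_apply, Matrix.one_apply] using this

lemma dot_conjT (A : Matrix (Fin p) (Fin q) ℝ) (x : Fin q → ℝ) (y : Fin p → ℝ) :
    x ⬝ᵥ (Aᴴ *ᵥ y) = (A *ᵥ x) ⬝ᵥ y := by
  rw [Matrix.conjTranspose_eq_transpose_of_trivial, Matrix.mulVec_transpose,
    dotProduct_comm, ← Matrix.dotProduct_mulVec, dotProduct_comm]

lemma uv_dot (A : Matrix (Fin p) (Fin q) ℝ) (i j : Fin q) :
    uv A i ⬝ᵥ uv A j = if i = j then lam A j else 0 := by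
  rw [uv, uv, ← dot_conjT, Matrix.mulVec_mulVec, gram_mulVec, dotProduct_smul,
    ev_dot, smul_eq_mul]
  by_cases hij : i = j <;> simp [hij]

lemma uv_dot_self (A : Matrix (Fin p) (Fin q) ℝ) (i : Fin q) :
    uv A i ⬝ᵥ uv A i = lam A i := by simp [uv_dot]

lemma uv_eq_zero {A : Matrix (Fin p) (Fin q) ℝ} {i : Fin q} (h : lam A i = 0) :
    uv A i = 0 := by
  have := uv_dot_self A i
  rw [h] at this
  exact (dotProduct_self_eq_zero).mp this

lemma ev_mem_range {A : Matrix (Fin p) (Fin q) ℝ} {i : Fin q} (h : lam A i ≠ 0) :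
    ev A i = (lam A i)⁻¹ • (Aᴴ *ᵥ uv A i) := by
  have := gram_mulVec A i
  rw [← Matrix.mulVec_mulVec] at this
  rw [uv, this, smul_smul, inv_mul_cancel₀ h, one_smul]

/-! ### Frobenius inner product -/

noncomputable def finner (A B : Matrix (Fin p) (Fin q) ℝ) : ℝ := ∑ a, ∑ b, A a b * B a b

lemma frobNorm_eq (A : Matrix (Fin p) (Fin q) ℝ) : frobNorm A = Real.sqrt (finner A A) := by
  unfold frobNorm finner; congr 1; refine Finset.sum_congr rfl fun a _ => ?_
  refine Finset.sum_congr rfl fun b _ => ?_; ring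

lemma finner_self_nonneg (A : Matrix (Fin p) (Fin q) ℝ) : 0 ≤ finner A A :=
  Finset.sum_nonneg fun a _ => Finset.sum_nonneg fun b _ => mul_self_nonneg _

lemma frobNorm_nonneg (A : Matrix (Fin p) (Fin q) ℝ) : 0 ≤ frobNorm A := by
  rw [frobNorm_eq]; exact Real.sqrt_nonneg _

lemma frobNorm_sq (A : Matrix (Fin p) (Fin q) ℝ) : frobNorm A ^ 2 = finner A A := by
  rw [frobNorm_eq, Real.sq_sqrt (finner_self_nonneg A)]

lemma finner_comm (A B : Matrix (Fin p) (Fin q) ℝ) : finner A B = finner B A := by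
  unfold finner; refine Finset.sum_congr rfl fun a _ => Finset.sum_congr rfl fun b _ => ?_; ring

lemma finner_add_right (A B C : Matrix (Fin p) (Fin q) ℝ) :
    finner A (B + C) = finner A B + finner A C := by
  unfold finner; rw [← Finset.sum_add_distrib]
  refine Finset.sum_congr rfl fun a _ => ?_
  rw [← Finset.sum_add_distrib]
  refine Finset.sum_congr rfl fun b _ => ?_
  simp [Matrix.add_apply]; ring

lemma finner_add_left (A B C : Matrix (Fin p) (Fin q) ℝ) :
    finner (A + B) C = finner A C + finner B C := by
  rw [finner_comm, finner_add_right, finner_comm A, finner_comm B]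

lemma finner_neg_left (A B : Matrix (Fin p) (Fin q) ℝ) : finner (-A) B = - finner A B := by
  unfold finner; rw [← Finset.sum_neg_distrib]
  refine Finset.sum_congr rfl fun a _ => ?_
  rw [← Finset.sum_neg_distrib]
  exact Finset.sum_congr rfl fun b _ => by simp

lemma finner_smul_left (c : ℝ) (A B : Matrix (Fin p) (Fin q) ℝ) :
    finner (c • A) B = c * finner A B := by
  unfold finner; rw [Finset.mul_sum]
  refine Finset.sum_congr rfl fun a _ => ?_
  rw [Finset.mul_sum]
  refine Finset.sum_congr rfl fun b _ => ?_
  simp [Matrix.smul_apply]; ring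

lemma finner_sum_left {ι : Type*} (s : Finset ι) (f : ι → Matrix (Fin p) (Fin q) ℝ)
    (B : Matrix (Fin p) (Fin q) ℝ) :
    finner (∑ k ∈ s, f k) B = ∑ k ∈ s, finner (f k) B := by
  classical
  induction s using Finset.induction with
  | empty => simp [finner]
  | insert k s hk ih => rw [Finset.sum_insert hk, finner_add_left, ih,
      Finset.sum_insert hk]

lemma finner_sum_right {ι : Type*} (s : Finset ι) (A : Matrix (Fin p) (Fin q) ℝ)
    (f : ι → Matrix (Fin p) (Fin q) ℝ) :
    finner A (∑ k ∈ s, f k) = ∑ k ∈ s, finner A (f k) := by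
  rw [finner_comm, finner_sum_left]
  exact Finset.sum_congr rfl fun k _ => finner_comm _ _

lemma dot_cs (x y : Fin p → ℝ) : x ⬝ᵥ y ≤ Real.sqrt (x ⬝ᵥ x) * Real.sqrt (y ⬝ᵥ y) := by
  have h := Finset.sum_mul_sq_le_sq_mul_sq Finset.univ x y
  have hx : x ⬝ᵥ x = ∑ i, x i ^ 2 := by
    unfold dotProduct; exact Finset.sum_congr rfl fun i _ => (sq (x i)).symm
  have hy : y ⬝ᵥ y = ∑ i, y i ^ 2 := by
    unfold dotProduct; exact Finset.sum_congr rfl fun i _ => (sq (y i)).symm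
  calc x ⬝ᵥ y ≤ |x ⬝ᵥ y| := le_abs_self _
    _ = Real.sqrt ((x ⬝ᵥ y) ^ 2) := (Real.sqrt_sq_eq_abs _).symm
    _ ≤ Real.sqrt ((∑ i, x i ^ 2) * ∑ i, y i ^ 2) := Real.sqrt_le_sqrt h
    _ = Real.sqrt (x ⬝ᵥ x) * Real.sqrt (y ⬝ᵥ y) := by
        rw [hx, hy, Real.sqrt_mul (Finset.sum_nonneg fun i _ => sq_nonneg _)]

lemma finner_flatten (A B : Matrix (Fin p) (Fin q) ℝ) :
    finner A B = ∑ z : Fin p × Fin q, A z.1 z.2 * B z.1 z.2 := by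
  rw [Fintype.sum_prod_type]; rfl

lemma finner_cs (A B : Matrix (Fin p) (Fin q) ℝ) : finner A B ≤ frobNorm A * frobNorm B := by
  have h := Finset.sum_mul_sq_le_sq_mul_sq Finset.univ
    (fun z : Fin p × Fin q => A z.1 z.2) (fun z : Fin p × Fin q => B z.1 z.2)
  have hA : frobNorm A = Real.sqrt (∑ z : Fin p × Fin q, A z.1 z.2 ^ 2) := by
    unfold frobNorm; rw [Fintype.sum_prod_type]
  have hB : frobNorm B = Real.sqrt (∑ z : Fin p × Fin q, B z.1 z.2 ^ 2) := by
    unfold frobNorm; rw [Fintype.sum_prod_type]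
  rw [finner_flatten, hA, hB]
  calc (∑ z : Fin p × Fin q, A z.1 z.2 * B z.1 z.2)
      ≤ |∑ z : Fin p × Fin q, A z.1 z.2 * B z.1 z.2| := le_abs_self _
    _ = Real.sqrt ((∑ z : Fin p × Fin q, A z.1 z.2 * B z.1 z.2) ^ 2) :=
        (Real.sqrt_sq_eq_abs _).symm
    _ ≤ Real.sqrt ((∑ z : Fin p × Fin q, A z.1 z.2 ^ 2) * ∑ z : Fin p × Fin q, B z.1 z.2 ^ 2) :=
        Real.sqrt_le_sqrt h
    _ = _ := Real.sqrt_mul (Finset.sum_nonneg fun z _ => sq_nonneg _) _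

lemma frob_triangle (A B : Matrix (Fin p) (Fin q) ℝ) :
    frobNorm (A + B) ≤ frobNorm A + frobNorm B := by
  have h1 : finner (A+B) (A+B) ≤ (frobNorm A + frobNorm B)^2 := by
    rw [finner_add_left, finner_add_right, finner_add_right]
    have := finner_cs A B
    have := finner_cs B A
    rw [← frobNorm_sq, ← frobNorm_sq]
    nlinarith [frobNorm_nonneg A, frobNorm_nonneg B]
  rw [frobNorm_eq]
  calc Real.sqrt (finner (A+B) (A+B)) ≤ Real.sqrt ((frobNorm A + frobNorm B)^2) :=
        Real.sqrt_le_sqrt h1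
    _ = frobNorm A + frobNorm B := by
        rw [Real.sqrt_sq (add_nonneg (frobNorm_nonneg A) (frobNorm_nonneg B))]

lemma frob_sum_le {ι : Type*} (s : Finset ι) (f : ι → Matrix (Fin p) (Fin q) ℝ) :
    frobNorm (∑ k ∈ s, f k) ≤ ∑ k ∈ s, frobNorm (f k) := by
  classical
  induction s using Finset.induction with
  | empty => simp [frobNorm]
  | insert k s hk ih =>
                    rw [Finset.sum_insert hk, Finset.sum_insert hk]
                    exact (frob_triangle _ _).trans (by linarith)

lemma frob_neg (A : Matrix (Fin p) (Fin q) ℝ) : frobNorm (-A) = frobNorm A := by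
  unfold frobNorm; congr 1
  refine Finset.sum_congr rfl fun a _ => Finset.sum_congr rfl fun b _ => ?_
  simp

lemma frobNorm_eq_zero_iff (A : Matrix (Fin p) (Fin q) ℝ) : frobNorm A = 0 ↔ A = 0 := by
  constructor
  · intro h
    rw [frobNorm_eq, Real.sqrt_eq_zero (finner_self_nonneg A)] at h
    ext a b
    have h2 : ∀ a' ∈ Finset.univ (α := Fin p), (∑ b', A a' b' * A a' b') = 0 := by
      intro a' _
      have := (Finset.sum_eq_zero_iff_of_nonneg (fun a' _ =>
        Finset.sum_nonneg fun b' _ => mul_self_nonneg (A a' b'))).mp h a' (Finset.mem_univ _)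
      exact this
    have h3 := (Finset.sum_eq_zero_iff_of_nonneg (fun b' _ => mul_self_nonneg (A a b'))).mp
      (h2 a (Finset.mem_univ a)) b (Finset.mem_univ b)
    have := mul_self_eq_zero.mp h3
    simpa using this
  · intro h; subst h; simp [frobNorm]

lemma frob_le_of_pyth (A B : Matrix (Fin p) (Fin q) ℝ) (h : finner A B = 0) :
    frobNorm A ≤ frobNorm (A + B) := by
  rw [frobNorm_eq (A + B), frobNorm_eq A]
  apply Real.sqrt_le_sqrt
  rw [finner_add_left, finner_add_right, finner_add_right, h, finner_comm B A, h]
  linarith [finner_self_nonneg B]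

/-! ### vecMulVec algebra -/

lemma vmv_mulVec (x : Fin p → ℝ) (y : Fin q → ℝ) (z : Fin q → ℝ) :
    Matrix.vecMulVec x y *ᵥ z = (y ⬝ᵥ z) • x := by
  ext a
  show ∑ b, (x a * y b) * z b = (∑ i, y i * z i) * x a
  rw [Finset.sum_mul]
  exact Finset.sum_congr rfl fun b _ => by ring

lemma mul_vmv (M : Matrix (Fin d) (Fin p) ℝ) (x : Fin p → ℝ) (y : Fin q → ℝ) :
    M * Matrix.vecMulVec x y = Matrix.vecMulVec (M *ᵥ x) y := by
  ext a b
  simp [Matrix.mul_apply, Matrix.vecMulVec_apply, Matrix.mulVec, dotProduct, Finset.sum_mul,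
    mul_assoc]

lemma vmv_mul (x : Fin p → ℝ) (y : Fin q → ℝ) (M : Matrix (Fin q) (Fin d) ℝ) :
    Matrix.vecMulVec x y * M = Matrix.vecMulVec x (y ᵥ* M) := by
  ext a b
  simp [Matrix.mul_apply, Matrix.vecMulVec_apply, Matrix.vecMul, dotProduct, Finset.mul_sum,
    mul_assoc]

lemma vmv_mul_vmv (x : Fin p → ℝ) (y z : Fin q → ℝ) (w : Fin d → ℝ) :
    Matrix.vecMulVec x y * Matrix.vecMulVec z w = (y ⬝ᵥ z) • Matrix.vecMulVec x w := by
  ext a b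
  simp [Matrix.mul_apply, Matrix.vecMulVec_apply, dotProduct, Finset.sum_mul, Finset.mul_sum]
  refine Finset.sum_congr rfl fun c _ => by ring

lemma finner_vmv (X : Matrix (Fin p) (Fin q) ℝ) (x : Fin p → ℝ) (y : Fin q → ℝ) :
    finner X (Matrix.vecMulVec x y) = x ⬝ᵥ (X *ᵥ y) := by
  unfold finner
  simp [Matrix.vecMulVec_apply, dotProduct, Matrix.mulVec, Finset.mul_sum]
  refine Finset.sum_congr rfl fun a _ => Finset.sum_congr rfl fun b _ => by ring

lemma vmv_conjT (x : Fin p → ℝ) (y : Fin q → ℝ) :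
    (Matrix.vecMulVec x y)ᴴ = Matrix.vecMulVec y x := by
  ext a b
  simp [Matrix.conjTranspose_apply, Matrix.vecMulVec_apply, mul_comm]

lemma smul_vmv (c : ℝ) (x : Fin p → ℝ) (y : Fin q → ℝ) :
    c • Matrix.vecMulVec x y = Matrix.vecMulVec (c • x) y := by
  ext a b
  simp [Matrix.vecMulVec_apply, mul_assoc]

lemma rank_vmv_le (x : Fin p → ℝ) (y : Fin q → ℝ) : (Matrix.vecMulVec x y).rank ≤ 1 := by
  rw [Matrix.vecMulVec_eq (Fin 1)]
  exact le_trans (Matrix.rank_mul_le_left _ _)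
    (le_trans (Matrix.rank_le_card_width _) (by simp))

lemma rank_matrix_add_le (A B : Matrix (Fin p) (Fin q) ℝ) :
    (A + B).rank ≤ A.rank + B.rank := by
  unfold Matrix.rank
  have h : (A + B).mulVecLin = A.mulVecLin + B.mulVecLin := Matrix.mulVecLin_add A B
  rw [h]
  have hsub : LinearMap.range (A.mulVecLin + B.mulVecLin) ≤
      LinearMap.range A.mulVecLin ⊔ LinearMap.range B.mulVecLin := by
    rintro z ⟨x, rfl⟩
    exact Submodule.mem_sup.mpr ⟨A.mulVecLin x, ⟨x, rfl⟩, B.mulVecLin x, ⟨x, rfl⟩, rfl⟩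
  calc Module.finrank ℝ (LinearMap.range (A.mulVecLin + B.mulVecLin))
      ≤ Module.finrank ℝ ((LinearMap.range A.mulVecLin) ⊔ (LinearMap.range B.mulVecLin) :
        Submodule ℝ (Fin p → ℝ)) := Submodule.finrank_mono hsub
    _ ≤ _ := Submodule.finrank_add_le_finrank_add_finrank _ _

lemma rank_sum_le {ι : Type*} (s : Finset ι) (f : ι → Matrix (Fin p) (Fin q) ℝ) :
    (∑ k ∈ s, f k).rank ≤ ∑ k ∈ s, (f k).rank := by
  classical
  induction s using Finset.induction with
  | empty => simp
  | insert k s hk ih =>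
                    rw [Finset.sum_insert hk, Finset.sum_insert hk]
                    exact le_trans (rank_matrix_add_le _ _) (by omega)

/-! ### Outer expansion -/

noncomputable def outerSub (A : Matrix (Fin p) (Fin q) ℝ) (S : Finset (Fin q)) :
    Matrix (Fin p) (Fin q) ℝ :=
  ∑ i ∈ S, Matrix.vecMulVec (uv A i) (ev A i)

lemma outer_univ (A : Matrix (Fin p) (Fin q) ℝ) : outerSub A Finset.univ = A := by
  ext a b
  unfold outerSub
  have h1 : ∀ i, (Matrix.vecMulVec (uv A i) (ev A i)) a b
      = ∑ c, A a c * (ev A i c * ev A i b) := by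
    intro i
    simp only [Matrix.vecMulVec_apply, uv, Matrix.mulVec, dotProduct, Finset.sum_mul]
    exact Finset.sum_congr rfl fun c _ => by ring
  rw [Matrix.sum_apply, Finset.sum_congr rfl (fun i _ => h1 i), Finset.sum_comm]
  have h2 : ∀ c, ∑ i, A a c * (ev A i c * ev A i b) = A a c * (if c = b then 1 else 0) := by
    intro c; rw [← Finset.mul_sum, ev_complete]
  rw [Finset.sum_congr rfl (fun c _ => h2 c)]
  simp

lemma finner_outer_outer (A : Matrix (Fin p) (Fin q) ℝ) (S T : Finset (Fin q)) :
    finner (outerSub A S) (outerSub A T) = ∑ i ∈ S ∩ T, lam A i := by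
  unfold outerSub
  rw [finner_sum_left]
  have h : ∀ i ∈ S, finner (Matrix.vecMulVec (uv A i) (ev A i))
      (∑ j ∈ T, Matrix.vecMulVec (uv A j) (ev A j)) = if i ∈ T then lam A i else 0 := by
    intro i _
    rw [finner_sum_right]
    have h2 : ∀ j ∈ T, finner (Matrix.vecMulVec (uv A i) (ev A i))
        (Matrix.vecMulVec (uv A j) (ev A j)) = if j = i then lam A i else 0 := by
      intro j _
      rw [finner_vmv, vmv_mulVec, dotProduct_smul, uv_dot, ev_dot, smul_eq_mul]
      by_cases hji : j = i <;> simp [hji]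
    rw [Finset.sum_congr rfl h2, Finset.sum_ite_eq' T i (fun _ => lam A i)]
  rw [Finset.sum_congr rfl h, Finset.sum_ite_mem]

lemma frobsq_outer (A : Matrix (Fin p) (Fin q) ℝ) (S : Finset (Fin q)) :
    frobNorm (outerSub A S) ^ 2 = ∑ i ∈ S, lam A i := by
  rw [frobNorm_sq, finner_outer_outer, Finset.inter_self]

lemma rank_outer_le (A : Matrix (Fin p) (Fin q) ℝ) (S : Finset (Fin q)) :
    (outerSub A S).rank ≤ S.card := by
  unfold outerSub
  calc (∑ i ∈ S, Matrix.vecMulVec (uv A i) (ev A i)).rank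
      ≤ ∑ i ∈ S, (Matrix.vecMulVec (uv A i) (ev A i)).rank := rank_sum_le _ _
    _ ≤ ∑ _i ∈ S, 1 := Finset.sum_le_sum fun i _ => rank_vmv_le _ _
    _ = S.card := by simp

lemma frobsq_eq_sum_lam (A : Matrix (Fin p) (Fin q) ℝ) :
    frobNorm A ^ 2 = ∑ i, lam A i := by
  rw [← outer_univ A, frobsq_outer]
  rw [outer_univ]


/-! ### small linear algebra helpers -/

lemma sum_dotProduct {ι : Type*} (s : Finset ι) (f : ι → Fin p → ℝ) (y : Fin p → ℝ) :
    (∑ k ∈ s, f k) ⬝ᵥ y = ∑ k ∈ s, f k ⬝ᵥ y := by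
  unfold dotProduct
  rw [Finset.sum_comm]
  exact Finset.sum_congr rfl fun a _ => by rw [Finset.sum_apply, Finset.sum_mul]

lemma dotProduct_sum {ι : Type*} (s : Finset ι) (x : Fin p → ℝ) (f : ι → Fin p → ℝ) :
    x ⬝ᵥ (∑ k ∈ s, f k) = ∑ k ∈ s, x ⬝ᵥ f k := by
  rw [dotProduct_comm, sum_dotProduct]
  exact Finset.sum_congr rfl fun k _ => dotProduct_comm _ _

lemma sum_matrix_mulVec {ι : Type*} (s : Finset ι) (f : ι → Matrix (Fin p) (Fin q) ℝ)
    (x : Fin q → ℝ) : (∑ k ∈ s, f k) *ᵥ x = ∑ k ∈ s, (f k *ᵥ x) := by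
  ext a
  rw [Finset.sum_apply]
  show (fun b => (∑ k ∈ s, f k) a b) ⬝ᵥ x = _
  have : (fun b => (∑ k ∈ s, f k) a b) = ∑ k ∈ s, (fun b => f k a b) := by
    funext b
    simp [Matrix.sum_apply]
  rw [this, sum_dotProduct]
  rfl

lemma mulVec_smul' (c : ℝ) (A : Matrix (Fin p) (Fin q) ℝ) (x : Fin q → ℝ) :
    (c • A) *ᵥ x = c • (A *ᵥ x) := Matrix.smul_mulVec c A x

/-! ### Nuclear norm facts -/

lemma nucNorm_eq (A : Matrix (Fin p) (Fin q) ℝ) : nucNorm A = ∑ i, Real.sqrt (lam A i) := rfl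

lemma nucNorm_nonneg (A : Matrix (Fin p) (Fin q) ℝ) : 0 ≤ nucNorm A :=
  Finset.sum_nonneg fun i _ => Real.sqrt_nonneg _

lemma eq_zero_of_nucNorm_eq_zero {A : Matrix (Fin p) (Fin q) ℝ} (h : nucNorm A = 0) :
    A = 0 := by
  rw [nucNorm_eq] at h
  have hlam : ∀ i ∈ Finset.univ (α := Fin q), lam A i = 0 := by
    intro i _
    have := (Finset.sum_eq_zero_iff_of_nonneg (fun i _ => Real.sqrt_nonneg (lam A i))).mp h i
      (Finset.mem_univ i)
    have h2 : lam A i ≤ 0 := by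
      by_contra hc
      push_neg at hc
      exact absurd this (ne_of_gt (Real.sqrt_pos.mpr hc))
    exact le_antisymm h2 (lam_nonneg A i)
  rw [← frobNorm_eq_zero_iff]
  have h3 : frobNorm A ^ 2 = 0 := by
    rw [frobsq_eq_sum_lam]
    exact Finset.sum_eq_zero hlam
  have := frobNorm_nonneg A
  nlinarith

lemma card_nonzero_eq_rank (A : Matrix (Fin p) (Fin q) ℝ) :
    (Finset.univ.filter (fun i => lam A i ≠ 0)).card = A.rank := by
  classical
  have h1 := (Matrix.isHermitian_conjTranspose_mul_self A).rank_eq_card_non_zero_eigs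
  have h2 : (Aᴴ * A).rank = A.rank := by
    rw [Matrix.conjTranspose_eq_transpose_of_trivial, Matrix.rank_transpose_mul_self]
  rw [← h2, h1, Fintype.card_subtype]
  rfl

lemma nuc_le_sqrt_rank (A : Matrix (Fin p) (Fin q) ℝ) :
    nucNorm A ≤ Real.sqrt (A.rank) * frobNorm A := by
  classical
  set T := Finset.univ.filter (fun i => lam A i ≠ 0) with hT
  have h0 : nucNorm A = ∑ i ∈ T, Real.sqrt (lam A i) := by
    rw [nucNorm_eq]
    refine (Finset.sum_subset (Finset.subset_univ T) ?_).symm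
    intro i _ hi
    rw [hT] at hi
    simp only [Finset.mem_filter, Finset.mem_univ, true_and, not_not] at hi
    rw [hi, Real.sqrt_zero]
  have h1 : (∑ i ∈ T, Real.sqrt (lam A i)) ^ 2 ≤ T.card * ∑ i ∈ T, lam A i := by
    have := sq_sum_le_card_mul_sum_sq (s := T) (f := fun i => Real.sqrt (lam A i))
    have heq : ∀ i ∈ T, Real.sqrt (lam A i) ^ 2 = lam A i := fun i _ =>
      Real.sq_sqrt (lam_nonneg A i)
    rwa [Finset.sum_congr rfl heq] at this
  have h2 : ∑ i ∈ T, lam A i ≤ ∑ i, lam A i :=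
    Finset.sum_le_sum_of_subset_of_nonneg (Finset.subset_univ T)
      (fun i _ _ => lam_nonneg A i)
  have h3 : nucNorm A ^ 2 ≤ (A.rank : ℝ) * frobNorm A ^ 2 := by
    rw [h0, frobsq_eq_sum_lam, ← card_nonzero_eq_rank A, ← hT]
    calc (∑ i ∈ T, Real.sqrt (lam A i)) ^ 2 ≤ T.card * ∑ i ∈ T, lam A i := h1
      _ ≤ (T.card : ℝ) * ∑ i, lam A i := by
          apply mul_le_mul_of_nonneg_left h2 (by positivity)
  have h4 : nucNorm A = Real.sqrt (nucNorm A ^ 2) := by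
    rw [Real.sqrt_sq (nucNorm_nonneg A)]
  rw [h4]
  calc Real.sqrt (nucNorm A ^ 2) ≤ Real.sqrt ((A.rank : ℝ) * frobNorm A ^ 2) :=
        Real.sqrt_le_sqrt h3
    _ = Real.sqrt (A.rank) * frobNorm A := by
        rw [Real.sqrt_mul (by positivity), Real.sqrt_sq (frobNorm_nonneg A)]

/-! ### Contractions and nuclear norm duality -/

def Contr (B : Matrix (Fin p) (Fin q) ℝ) : Prop :=
  ∀ x : Fin q → ℝ, (B *ᵥ x) ⬝ᵥ (B *ᵥ x) ≤ x ⬝ᵥ x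

lemma Contr.neg {B : Matrix (Fin p) (Fin q) ℝ} (h : Contr B) : Contr (-B) := by
  intro x
  have : (-B) *ᵥ x = -(B *ᵥ x) := Matrix.neg_mulVec x B
  rw [this]
  simpa using h x

lemma finner_le_nuc {B : Matrix (Fin p) (Fin q) ℝ} (hB : Contr B)
    (A : Matrix (Fin p) (Fin q) ℝ) : finner B A ≤ nucNorm A := by
  conv_lhs => rw [← outer_univ A]
  unfold outerSub
  rw [finner_sum_right, nucNorm_eq]
  refine Finset.sum_le_sum fun i _ => ?_
  rw [finner_vmv]
  have h1 : uv A i ⬝ᵥ (B *ᵥ ev A i) ≤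
      Real.sqrt (uv A i ⬝ᵥ uv A i) * Real.sqrt ((B *ᵥ ev A i) ⬝ᵥ (B *ᵥ ev A i)) :=
    dot_cs _ _
  have h2 : Real.sqrt ((B *ᵥ ev A i) ⬝ᵥ (B *ᵥ ev A i)) ≤ 1 := by
    have := hB (ev A i)
    rw [ev_dot] at this
    simp only [if_pos rfl] at this
    calc Real.sqrt ((B *ᵥ ev A i) ⬝ᵥ (B *ᵥ ev A i)) ≤ Real.sqrt 1 := Real.sqrt_le_sqrt this
      _ = 1 := Real.sqrt_one
  calc uv A i ⬝ᵥ (B *ᵥ ev A i)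
      ≤ Real.sqrt (uv A i ⬝ᵥ uv A i) * Real.sqrt ((B *ᵥ ev A i) ⬝ᵥ (B *ᵥ ev A i)) := h1
    _ ≤ Real.sqrt (uv A i ⬝ᵥ uv A i) * 1 := by
        apply mul_le_mul_of_nonneg_left h2 (Real.sqrt_nonneg _)
    _ = Real.sqrt (lam A i) := by rw [mul_one, uv_dot_self]

/-- coefficient of the dual certificate -/
noncomputable def cc (A : Matrix (Fin p) (Fin q) ℝ) (i : Fin q) : ℝ :=
  if lam A i = 0 then 0 else (Real.sqrt (lam A i))⁻¹

lemma cc_nonneg (A : Matrix (Fin p) (Fin q) ℝ) (i : Fin q) : 0 ≤ cc A i := by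
  unfold cc
  split
  · exact le_refl 0
  · exact inv_nonneg.mpr (Real.sqrt_nonneg _)

/-- the dual certificate of `A` -/
noncomputable def dualB (A : Matrix (Fin p) (Fin q) ℝ) : Matrix (Fin p) (Fin q) ℝ :=
  ∑ i, cc A i • Matrix.vecMulVec (uv A i) (ev A i)

lemma dualB_mulVec (A : Matrix (Fin p) (Fin q) ℝ) (x : Fin q → ℝ) :
    dualB A *ᵥ x = ∑ i, (cc A i * (ev A i ⬝ᵥ x)) • uv A i := by
  unfold dualB
  rw [sum_matrix_mulVec]
  refine Finset.sum_congr rfl fun i _ => ?_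
  rw [mulVec_smul', vmv_mulVec, smul_smul]

lemma finner_dualB (A M : Matrix (Fin p) (Fin q) ℝ) :
    finner (dualB A) M = ∑ i, cc A i * (uv A i ⬝ᵥ (M *ᵥ ev A i)) := by
  unfold dualB
  rw [finner_sum_left]
  refine Finset.sum_congr rfl fun i _ => ?_
  rw [finner_smul_left, finner_comm, finner_vmv]

lemma finner_dualB_self (A : Matrix (Fin p) (Fin q) ℝ) : finner (dualB A) A = nucNorm A := by
  rw [finner_dualB, nucNorm_eq]
  refine Finset.sum_congr rfl fun i _ => ?_
  have : A *ᵥ ev A i = uv A i := rfl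
  rw [this, uv_dot_self]
  unfold cc
  by_cases h : lam A i = 0
  · simp [h]
  · have hpos : 0 < Real.sqrt (lam A i) :=
      Real.sqrt_pos.mpr (lt_of_le_of_ne (lam_nonneg A i) (Ne.symm h))
    rw [if_neg h, inv_mul_eq_div, div_eq_iff hpos.ne']
    exact (Real.mul_self_sqrt (lam_nonneg A i)).symm

/-! ### Bessel and contraction of dual certificates -/

lemma dualB_img_dot_self (A : Matrix (Fin p) (Fin q) ℝ) (x : Fin q → ℝ) :
    (dualB A *ᵥ x) ⬝ᵥ (dualB A *ᵥ x)
      = ∑ i ∈ Finset.univ.filter (fun i => lam A i ≠ 0), (ev A i ⬝ᵥ x) ^ 2 := by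
  classical
  rw [dualB_mulVec, sum_dotProduct]
  have h1 : ∀ i, ((cc A i * (ev A i ⬝ᵥ x)) • uv A i) ⬝ᵥ (∑ j, (cc A j * (ev A j ⬝ᵥ x)) • uv A j)
      = if lam A i = 0 then 0 else (ev A i ⬝ᵥ x) ^ 2 := by
    intro i
    rw [smul_dotProduct, dotProduct_sum]
    have h2 : ∀ j, uv A i ⬝ᵥ ((cc A j * (ev A j ⬝ᵥ x)) • uv A j)
        = if i = j then cc A j * (ev A j ⬝ᵥ x) * lam A j else 0 := by
      intro j
      rw [dotProduct_smul, smul_eq_mul, uv_dot]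
      by_cases hij : i = j <;> simp [hij] <;> ring
    rw [Finset.sum_congr rfl (fun j _ => h2 j), Finset.sum_ite_eq Finset.univ i
      (fun j => cc A j * (ev A j ⬝ᵥ x) * lam A j), if_pos (Finset.mem_univ i)]
    unfold cc
    by_cases h : lam A i = 0
    · simp [h]
    · rw [if_neg h, if_neg h, smul_eq_mul]
      have hs : Real.sqrt (lam A i) * Real.sqrt (lam A i) = lam A i :=
        Real.mul_self_sqrt (lam_nonneg A i)
      have hpos : 0 < Real.sqrt (lam A i) :=
        Real.sqrt_pos.mpr (lt_of_le_of_ne (lam_nonneg A i) (Ne.symm h))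
      field_simp
      rw [Real.sq_sqrt (lam_nonneg A i)]
      ring
  rw [Finset.sum_congr rfl (fun i _ => h1 i)]
  rw [Finset.sum_ite, Finset.sum_const_zero, zero_add]

lemma dualB_img_cross_dot (A A' : Matrix (Fin p) (Fin q) ℝ)
    (hu : ∀ i j, uv A i ⬝ᵥ uv A' j = 0) (x : Fin q → ℝ) :
    (dualB A *ᵥ x) ⬝ᵥ (dualB A' *ᵥ x) = 0 := by
  rw [dualB_mulVec, dualB_mulVec, sum_dotProduct]
  refine Finset.sum_eq_zero fun i _ => ?_
  rw [smul_dotProduct, dotProduct_sum]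
  rw [Finset.sum_eq_zero (fun j _ => by rw [dotProduct_smul, hu i j]; simp)]
  simp

lemma bessel_pair (A A' : Matrix (Fin p) (Fin q) ℝ)
    (hv : ∀ i j, lam A i ≠ 0 → lam A' j ≠ 0 → ev A i ⬝ᵥ ev A' j = 0) (x : Fin q → ℝ) :
    (∑ i ∈ Finset.univ.filter (fun i => lam A i ≠ 0), (ev A i ⬝ᵥ x) ^ 2)
      + (∑ j ∈ Finset.univ.filter (fun j => lam A' j ≠ 0), (ev A' j ⬝ᵥ x) ^ 2) ≤ x ⬝ᵥ x := by
  classical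
  set T1 := Finset.univ.filter (fun i => lam A i ≠ 0) with hT1
  set T2 := Finset.univ.filter (fun j => lam A' j ≠ 0) with hT2
  set a := ∑ i ∈ T1, (ev A i ⬝ᵥ x) • ev A i with ha
  set b := ∑ j ∈ T2, (ev A' j ⬝ᵥ x) • ev A' j with hb
  set S1 := ∑ i ∈ T1, (ev A i ⬝ᵥ x) ^ 2 with hS1
  set S2 := ∑ j ∈ T2, (ev A' j ⬝ᵥ x) ^ 2 with hS2
  have hxa : x ⬝ᵥ a = S1 := by
    rw [ha, dotProduct_sum, hS1]
    refine Finset.sum_congr rfl fun i _ => ?_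
    rw [dotProduct_smul, smul_eq_mul, dotProduct_comm]
    ring
  have hxb : x ⬝ᵥ b = S2 := by
    rw [hb, dotProduct_sum, hS2]
    refine Finset.sum_congr rfl fun j _ => ?_
    rw [dotProduct_smul, smul_eq_mul, dotProduct_comm]
    ring
  have haa : a ⬝ᵥ a = S1 := by
    rw [ha, sum_dotProduct, hS1]
    refine Finset.sum_congr rfl fun i hi => ?_
    rw [smul_dotProduct, dotProduct_sum]
    have h2 : ∀ j ∈ T1, ev A i ⬝ᵥ ((ev A j ⬝ᵥ x) • ev A j)
        = if i = j then (ev A j ⬝ᵥ x) else 0 := by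
      intro j _
      rw [dotProduct_smul, smul_eq_mul, ev_dot]
      by_cases hij : i = j <;> simp [hij]
    rw [Finset.sum_congr rfl h2, Finset.sum_ite_eq T1 i (fun j => ev A j ⬝ᵥ x), if_pos hi,
      smul_eq_mul]
    ring
  have hbb : b ⬝ᵥ b = S2 := by
    rw [hb, sum_dotProduct, hS2]
    refine Finset.sum_congr rfl fun j hj => ?_
    rw [smul_dotProduct, dotProduct_sum]
    have h2 : ∀ k ∈ T2, ev A' j ⬝ᵥ ((ev A' k ⬝ᵥ x) • ev A' k)
        = if j = k then (ev A' k ⬝ᵥ x) else 0 := by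
      intro k _
      rw [dotProduct_smul, smul_eq_mul, ev_dot]
      by_cases hjk : j = k <;> simp [hjk]
    rw [Finset.sum_congr rfl h2, Finset.sum_ite_eq T2 j (fun k => ev A' k ⬝ᵥ x), if_pos hj,
      smul_eq_mul]
    ring
  have hab : a ⬝ᵥ b = 0 := by
    rw [ha, sum_dotProduct]
    refine Finset.sum_eq_zero fun i hi => ?_
    rw [smul_dotProduct, hb, dotProduct_sum]
    have hi' : lam A i ≠ 0 := by
      rw [hT1] at hi
      exact (Finset.mem_filter.mp hi).2
    rw [Finset.sum_eq_zero (fun j hj => ?_)]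
    · simp
    · have hj' : lam A' j ≠ 0 := by
        rw [hT2] at hj
        exact (Finset.mem_filter.mp hj).2
      rw [dotProduct_smul, hv i j hi' hj']
      simp
  have hy : (0:ℝ) ≤ (x - a - b) ⬝ᵥ (x - a - b) := by
    have : ∀ k, 0 ≤ ((x - a - b) k) * ((x - a - b) k) := fun k => mul_self_nonneg _
    exact Finset.sum_nonneg fun k _ => this k
  have hexp : (x - a - b) ⬝ᵥ (x - a - b) = x ⬝ᵥ x - S1 - S2 := by
    have e1 : (x - a - b) ⬝ᵥ (x - a - b)
        = x ⬝ᵥ x - x ⬝ᵥ a - x ⬝ᵥ b - (a ⬝ᵥ x - a ⬝ᵥ a - a ⬝ᵥ b) - (b ⬝ᵥ x - b ⬝ᵥ a - b ⬝ᵥ b) := by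
      simp only [sub_dotProduct, dotProduct_sub]
      ring
    rw [e1, hxa, hxb, haa, hbb, hab, dotProduct_comm a x, hxa,
      dotProduct_comm b x, hxb, dotProduct_comm b a, hab]
    ring
  rw [hexp] at hy
  linarith

lemma contr_dual_pair (A A' : Matrix (Fin p) (Fin q) ℝ)
    (hu : ∀ i j, uv A i ⬝ᵥ uv A' j = 0)
    (hv : ∀ i j, lam A i ≠ 0 → lam A' j ≠ 0 → ev A i ⬝ᵥ ev A' j = 0) :
    Contr (dualB A + dualB A') := by
  intro x
  rw [Matrix.add_mulVec]
  rw [add_dotProduct, dotProduct_add, dotProduct_add]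
  have hc : (dualB A' *ᵥ x) ⬝ᵥ (dualB A *ᵥ x) = 0 := by
    rw [dotProduct_comm]
    exact dualB_img_cross_dot A A' hu x
  rw [dualB_img_dot_self, dualB_img_dot_self, dualB_img_cross_dot A A' hu x, hc]
  have := bessel_pair A A' hv x
  linarith

/-! ### The key nuclear-norm comparison -/

lemma mulVec_ev_zero {Θ C : Matrix (Fin p) (Fin q) ℝ} (h2 : Θ * Cᴴ = 0) {j : Fin q}
    (hj : lam C j ≠ 0) : Θ *ᵥ ev C j = 0 := by
  rw [ev_mem_range hj, Matrix.mulVec_smul, Matrix.mulVec_mulVec, h2]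
  simp [Matrix.zero_mulVec]

lemma nuc_compare {Θ C D0 H : Matrix (Fin p) (Fin q) ℝ}
    (h1 : Θᴴ * C = 0) (h2 : Θ * Cᴴ = 0) (hH : H = Θ + D0 + C)
    (hnuc : nucNorm H ≤ nucNorm Θ) : nucNorm C ≤ nucNorm D0 := by
  classical
  have hu : ∀ i j, uv Θ i ⬝ᵥ uv C j = 0 := by
    intro i j
    rw [uv, uv, ← dot_conjT, Matrix.mulVec_mulVec, h1]
    simp [Matrix.zero_mulVec]
  have hv : ∀ i j, lam Θ i ≠ 0 → lam C j ≠ 0 → ev Θ i ⬝ᵥ ev C j = 0 := by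
    intro i j hi hj
    rw [ev_mem_range hi, smul_dotProduct,
      dotProduct_comm (Θᴴ *ᵥ uv Θ i) (ev C j), dot_conjT, mulVec_ev_zero h2 hj]
    simp
  set B := dualB Θ + dualB C with hB
  have hContr : Contr B := contr_dual_pair Θ C hu hv
  have hBH : finner B H ≤ nucNorm H := finner_le_nuc hContr H
  have hBTheta : finner B Θ = nucNorm Θ := by
    rw [hB, finner_add_left, finner_dualB_self]
    have : finner (dualB C) Θ = 0 := by
      rw [finner_dualB]
      refine Finset.sum_eq_zero fun j _ => ?_
      by_cases hj : lam C j = 0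
      · unfold cc; rw [if_pos hj]; ring
      · rw [mulVec_ev_zero h2 hj]
        simp
    rw [this, add_zero]
  have hBC : finner B C = nucNorm C := by
    rw [hB, finner_add_left, finner_dualB_self]
    have : finner (dualB Θ) C = 0 := by
      rw [finner_dualB]
      refine Finset.sum_eq_zero fun i _ => ?_
      have : uv Θ i ⬝ᵥ (C *ᵥ ev Θ i) = 0 := by
        rw [uv, ← dot_conjT, Matrix.mulVec_mulVec, h1]
        simp [Matrix.zero_mulVec]
      rw [this, mul_zero]
    rw [this]
    ring
  have hBD0 : -nucNorm D0 ≤ finner B D0 := by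
    have := finner_le_nuc (hContr.neg) D0
    rw [finner_neg_left] at this
    linarith
  have hsplit : finner B H = finner B Θ + finner B D0 + finner B C := by
    rw [hH, finner_add_right, finner_add_right]
  rw [hsplit, hBTheta, hBC] at hBH
  linarith

/-! ### Projections onto row/column spaces -/

noncomputable def projL (M : Matrix (Fin p) (Fin q) ℝ) : Matrix (Fin p) (Fin p) ℝ :=
  ∑ i, (if lam M i = 0 then (0:ℝ) else (lam M i)⁻¹) • Matrix.vecMulVec (uv M i) (uv M i)

noncomputable def projR (M : Matrix (Fin p) (Fin q) ℝ) : Matrix (Fin q) (Fin q) ℝ :=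
  ∑ i ∈ Finset.univ.filter (fun i => lam M i ≠ 0), Matrix.vecMulVec (ev M i) (ev M i)

lemma projL_conjT (M : Matrix (Fin p) (Fin q) ℝ) : (projL M)ᴴ = projL M := by
  unfold projL
  rw [Matrix.conjTranspose_sum]
  refine Finset.sum_congr rfl fun i _ => ?_
  rw [Matrix.conjTranspose_smul, vmv_conjT]
  norm_num

lemma projR_conjT (M : Matrix (Fin p) (Fin q) ℝ) : (projR M)ᴴ = projR M := by
  unfold projR
  rw [Matrix.conjTranspose_sum]
  refine Finset.sum_congr rfl fun i _ => ?_
  rw [vmv_conjT]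

lemma projL_idem (M : Matrix (Fin p) (Fin q) ℝ) : projL M * projL M = projL M := by
  unfold projL
  rw [Finset.sum_mul_sum]
  have h : ∀ i ∈ Finset.univ (α := Fin q), ∀ j ∈ Finset.univ (α := Fin q),
      ((if lam M i = 0 then (0:ℝ) else (lam M i)⁻¹) • Matrix.vecMulVec (uv M i) (uv M i)) *
        ((if lam M j = 0 then (0:ℝ) else (lam M j)⁻¹) • Matrix.vecMulVec (uv M j) (uv M j))
      = if j = i then (if lam M i = 0 then (0:ℝ) else (lam M i)⁻¹) •
          Matrix.vecMulVec (uv M i) (uv M i) else 0 := by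
    intro i _ j _
    by_cases hij : i = j
    · subst hij
      rw [Matrix.smul_mul, Matrix.mul_smul, vmv_mul_vmv, uv_dot, if_pos rfl, if_pos rfl,
        smul_smul, smul_smul]
      by_cases h0 : lam M i = 0
      · simp [h0]
      · rw [if_neg h0]
        congr 1
        field_simp
    · rw [Matrix.smul_mul, Matrix.mul_smul, vmv_mul_vmv, uv_dot, if_neg hij,
        if_neg (show ¬ j = i from fun hc => hij hc.symm)]
      simp
  rw [Finset.sum_congr rfl (fun i hi => Finset.sum_congr rfl (fun j hj => h i hi j hj))]
  refine Finset.sum_congr rfl fun i _ => ?_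
  rw [Finset.sum_ite_eq' Finset.univ i, if_pos (Finset.mem_univ i)]

lemma projR_idem (M : Matrix (Fin p) (Fin q) ℝ) : projR M * projR M = projR M := by
  classical
  unfold projR
  rw [Finset.sum_mul_sum]
  have h : ∀ i ∈ Finset.univ.filter (fun i => lam M i ≠ 0),
      ∀ j ∈ Finset.univ.filter (fun j => lam M j ≠ 0),
      Matrix.vecMulVec (ev M i) (ev M i) * Matrix.vecMulVec (ev M j) (ev M j)
      = if j = i then Matrix.vecMulVec (ev M i) (ev M i) else 0 := by
    intro i _ j _
    rw [vmv_mul_vmv, ev_dot]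
    by_cases hij : i = j
    · subst hij; simp
    · rw [if_neg hij, if_neg (fun hc => hij hc.symm)]
      simp
  rw [Finset.sum_congr rfl (fun i hi => Finset.sum_congr rfl (fun j hj => h i hi j hj))]
  refine Finset.sum_congr rfl fun i hi => ?_
  rw [Finset.sum_ite_eq' _ i, if_pos hi]

lemma projL_mul_self (M : Matrix (Fin p) (Fin q) ℝ) : projL M * M = M := by
  unfold projL
  rw [Matrix.sum_mul]
  have h : ∀ i, ((if lam M i = 0 then (0:ℝ) else (lam M i)⁻¹) •
      Matrix.vecMulVec (uv M i) (uv M i)) * M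
      = Matrix.vecMulVec (uv M i) (ev M i) := by
    intro i
    rw [Matrix.smul_mul, vmv_mul]
    have hvm : uv M i ᵥ* M = lam M i • ev M i := by
      have h1 : uv M i ᵥ* M = Mᴴ *ᵥ uv M i := by
        rw [Matrix.conjTranspose_eq_transpose_of_trivial, Matrix.mulVec_transpose]
      rw [h1, uv, Matrix.mulVec_mulVec, gram_mulVec]
    rw [hvm]
    by_cases h0 : lam M i = 0
    · rw [if_pos h0, h0]
      rw [uv_eq_zero h0]
      ext a b
      simp [Matrix.vecMulVec_apply]
    · rw [if_neg h0]
      ext a b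
      simp only [Matrix.smul_apply, Matrix.vecMulVec_apply, Pi.smul_apply, smul_eq_mul]
      field_simp
  rw [Finset.sum_congr rfl (fun i _ => h i)]
  exact outer_univ M

lemma self_mul_projR (M : Matrix (Fin p) (Fin q) ℝ) : M * projR M = M := by
  classical
  unfold projR
  rw [Matrix.mul_sum]
  have h : ∀ i, M * Matrix.vecMulVec (ev M i) (ev M i)
      = Matrix.vecMulVec (uv M i) (ev M i) := by
    intro i
    rw [mul_vmv]
    rfl
  rw [Finset.sum_congr rfl (fun i _ => h i)]
  rw [Finset.sum_subset (Finset.subset_univ _) (fun i _ hi => ?_)]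
  · exact outer_univ M
  · have h0 : lam M i = 0 := by
      simp only [Finset.mem_filter, Finset.mem_univ, true_and, not_not] at hi
      exact hi
    rw [uv_eq_zero h0]
    ext a b
    simp [Matrix.vecMulVec_apply]

lemma rank_projL_le (M : Matrix (Fin p) (Fin q) ℝ) : (projL M).rank ≤ M.rank := by
  classical
  unfold projL
  rw [← Finset.sum_filter_add_sum_filter_not Finset.univ (fun i => lam M i ≠ 0)]
  have hz : ∑ i ∈ Finset.univ.filter (fun i => ¬ lam M i ≠ 0),
      (if lam M i = 0 then (0:ℝ) else (lam M i)⁻¹) • Matrix.vecMulVec (uv M i) (uv M i) = 0 := by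
    refine Finset.sum_eq_zero fun i hi => ?_
    have h0 : lam M i = 0 := by
      have := (Finset.mem_filter.mp hi).2
      push_neg at this
      exact this
    rw [if_pos h0]
    simp
  rw [hz, add_zero]
  calc (∑ i ∈ Finset.univ.filter (fun i => lam M i ≠ 0),
        (if lam M i = 0 then (0:ℝ) else (lam M i)⁻¹) • Matrix.vecMulVec (uv M i) (uv M i)).rank
      ≤ ∑ i ∈ Finset.univ.filter (fun i => lam M i ≠ 0),
        ((if lam M i = 0 then (0:ℝ) else (lam M i)⁻¹) •
          Matrix.vecMulVec (uv M i) (uv M i)).rank := rank_sum_le _ _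
    _ ≤ ∑ _i ∈ Finset.univ.filter (fun i => lam M i ≠ 0), 1 := by
        refine Finset.sum_le_sum fun i _ => ?_
        rw [smul_vmv]
        exact rank_vmv_le _ _
    _ = (Finset.univ.filter (fun i => lam M i ≠ 0)).card := by simp
    _ = M.rank := card_nonzero_eq_rank M

lemma rank_projR_le (M : Matrix (Fin p) (Fin q) ℝ) : (projR M).rank ≤ M.rank := by
  classical
  unfold projR
  calc (∑ i ∈ Finset.univ.filter (fun i => lam M i ≠ 0),
        Matrix.vecMulVec (ev M i) (ev M i)).rank
      ≤ ∑ i ∈ Finset.univ.filter (fun i => lam M i ≠ 0),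
        (Matrix.vecMulVec (ev M i) (ev M i)).rank := rank_sum_le _ _
    _ ≤ ∑ _i ∈ Finset.univ.filter (fun i => lam M i ≠ 0), 1 :=
        Finset.sum_le_sum fun i _ => rank_vmv_le _ _
    _ = (Finset.univ.filter (fun i => lam M i ≠ 0)).card := by simp
    _ = M.rank := card_nonzero_eq_rank M

/-! ### The decomposition Δ = Δ0 + Δc -/

noncomputable def Dc (Θ Δ : Matrix (Fin p) (Fin q) ℝ) : Matrix (Fin p) (Fin q) ℝ :=
  (1 - projL Θ) * Δ * (1 - projR Θ)

noncomputable def D0 (Θ Δ : Matrix (Fin p) (Fin q) ℝ) : Matrix (Fin p) (Fin q) ℝ :=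
  Δ - Dc Θ Δ

lemma D0_add_Dc (Θ Δ : Matrix (Fin p) (Fin q) ℝ) : D0 Θ Δ + Dc Θ Δ = Δ := by
  unfold D0; abel

lemma D0_eq (Θ Δ : Matrix (Fin p) (Fin q) ℝ) :
    D0 Θ Δ = projL Θ * Δ + (1 - projL Θ) * Δ * projR Θ := by
  unfold D0 Dc
  simp only [Matrix.sub_mul, Matrix.mul_sub, Matrix.one_mul, Matrix.mul_one]
  abel

lemma rank_D0_le (Θ Δ : Matrix (Fin p) (Fin q) ℝ) :
    (D0 Θ Δ).rank ≤ Θ.rank + Θ.rank := by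
  rw [D0_eq]
  refine le_trans (rank_matrix_add_le _ _) (add_le_add ?_ ?_)
  · exact le_trans (Matrix.rank_mul_le_left _ _) (rank_projL_le Θ)
  · exact le_trans (Matrix.rank_mul_le_right _ _) (rank_projR_le Θ)

lemma thetaH_mul_Dc (Θ Δ : Matrix (Fin p) (Fin q) ℝ) : Θᴴ * Dc Θ Δ = 0 := by
  have hP : Θᴴ * (1 - projL Θ) = 0 := by
    have h1 : Θᴴ * projL Θ = Θᴴ := by
      have := congrArg Matrix.conjTranspose (projL_mul_self Θ)
      rw [Matrix.conjTranspose_mul, projL_conjT] at this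
      exact this
    rw [Matrix.mul_sub, Matrix.mul_one, h1, sub_self]
  unfold Dc
  rw [← Matrix.mul_assoc, ← Matrix.mul_assoc, hP, Matrix.zero_mul, Matrix.zero_mul]

lemma Dc_conjT (Θ Δ : Matrix (Fin p) (Fin q) ℝ) :
    (Dc Θ Δ)ᴴ = (1 - projR Θ) * Δᴴ * (1 - projL Θ) := by
  unfold Dc
  rw [Matrix.conjTranspose_mul, Matrix.conjTranspose_mul, Matrix.conjTranspose_sub,
    Matrix.conjTranspose_one, projR_conjT, Matrix.conjTranspose_sub, Matrix.conjTranspose_one,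
    projL_conjT, Matrix.mul_assoc]

lemma theta_mul_DcH (Θ Δ : Matrix (Fin p) (Fin q) ℝ) : Θ * (Dc Θ Δ)ᴴ = 0 := by
  have hQ : Θ * (1 - projR Θ) = 0 := by
    rw [Matrix.mul_sub, Matrix.mul_one, self_mul_projR, sub_self]
  rw [Dc_conjT]
  rw [← Matrix.mul_assoc, ← Matrix.mul_assoc, hQ, Matrix.zero_mul, Matrix.zero_mul]

lemma projL_mul_Dc (Θ Δ : Matrix (Fin p) (Fin q) ℝ) : projL Θ * Dc Θ Δ = 0 := by
  have h : projL Θ * (1 - projL Θ) = 0 := by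
    rw [Matrix.mul_sub, Matrix.mul_one, projL_idem, sub_self]
  unfold Dc
  rw [← Matrix.mul_assoc, ← Matrix.mul_assoc, h, Matrix.zero_mul, Matrix.zero_mul]

lemma projR_mul_DcH (Θ Δ : Matrix (Fin p) (Fin q) ℝ) : projR Θ * (Dc Θ Δ)ᴴ = 0 := by
  have h : projR Θ * (1 - projR Θ) = 0 := by
    rw [Matrix.mul_sub, Matrix.mul_one, projR_idem, sub_self]
  rw [Dc_conjT, ← Matrix.mul_assoc, ← Matrix.mul_assoc, h, Matrix.zero_mul, Matrix.zero_mul]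

lemma finner_D0_outer (Θ Δ : Matrix (Fin p) (Fin q) ℝ) (S : Finset (Fin q)) :
    finner (D0 Θ Δ) (outerSub (Dc Θ Δ) S) = 0 := by
  unfold outerSub
  rw [finner_sum_right]
  refine Finset.sum_eq_zero fun i _ => ?_
  rw [finner_vmv]
  by_cases h0 : lam (Dc Θ Δ) i = 0
  · rw [uv_eq_zero h0, zero_dotProduct]
  · rw [D0_eq, Matrix.add_mulVec, dotProduct_add]
    have t1 : uv (Dc Θ Δ) i ⬝ᵥ ((projL Θ * Δ) *ᵥ ev (Dc Θ Δ) i) = 0 := by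
      rw [← Matrix.mulVec_mulVec]
      have hherm : projL Θ = (projL Θ)ᴴ := (projL_conjT Θ).symm
      rw [hherm, dot_conjT]
      have : projL Θ *ᵥ uv (Dc Θ Δ) i = 0 := by
        rw [uv, Matrix.mulVec_mulVec, projL_mul_Dc]
        simp [Matrix.zero_mulVec]
      rw [this, zero_dotProduct]
    have t2 : uv (Dc Θ Δ) i ⬝ᵥ (((1 - projL Θ) * Δ * projR Θ) *ᵥ ev (Dc Θ Δ) i) = 0 := by
      rw [ev_mem_range h0, Matrix.mulVec_smul, Matrix.mulVec_mulVec, Matrix.mul_assoc,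
        projR_mul_DcH, Matrix.mul_zero]
      simp [Matrix.zero_mulVec]
    rw [t1, t2, add_zero]

/-! ### Sorting singular values and grouping into blocks -/

noncomputable def sperm (A : Matrix (Fin p) (Fin q) ℝ) : Equiv.Perm (Fin q) :=
  Tuple.sort (fun i => -lam A i)

lemma sorted_anti (A : Matrix (Fin p) (Fin q) ℝ) {i j : Fin q} (hij : i ≤ j) :
    lam A (sperm A j) ≤ lam A (sperm A i) := by
  have h := Tuple.monotone_sort (fun i => -lam A i) hij
  simp only [Function.comp_apply] at h
  unfold sperm
  linarith

def idx (t k : ℕ) : Finset (Fin q) := Finset.univ.filter (fun i => i.val / t = k)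

noncomputable def blk (A : Matrix (Fin p) (Fin q) ℝ) (t k : ℕ) : Matrix (Fin p) (Fin q) ℝ :=
  outerSub A ((idx t k).image (sperm A))

lemma sum_blk (A : Matrix (Fin p) (Fin q) ℝ) {t : ℕ} (ht : 0 < t) :
    ∑ k ∈ Finset.range q, blk A t k = A := by
  classical
  unfold blk outerSub
  have h1 : ∀ k, ∑ j ∈ (idx t k).image (sperm A), Matrix.vecMulVec (uv A j) (ev A j)
      = ∑ i ∈ idx (q := q) t k, Matrix.vecMulVec (uv A (sperm A i)) (ev A (sperm A i)) :=
    fun k => Finset.sum_image (fun x _ y _ h => (sperm A).injective h)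
  rw [Finset.sum_congr rfl (fun k _ => h1 k)]
  have h2 : ∀ i ∈ Finset.univ (α := Fin q), i.val / t ∈ Finset.range q := by
    intro i _
    rw [Finset.mem_range]
    exact lt_of_le_of_lt (Nat.div_le_self _ _) i.isLt
  have h3 := Finset.sum_fiberwise_of_maps_to h2
    (fun i => Matrix.vecMulVec (uv A (sperm A i)) (ev A (sperm A i)))
  unfold idx
  rw [h3]
  have h4 := Equiv.sum_comp (sperm A) (fun j => Matrix.vecMulVec (uv A j) (ev A j))
  rw [h4]
  exact outer_univ A

lemma val_image_idx_subset {t k : ℕ} (ht : 0 < t) :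
    (idx (q := q) t k).image Fin.val ⊆ Finset.Ico (k * t) (k * t + t) := by
  intro a ha
  rw [Finset.mem_image] at ha
  obtain ⟨i, hi, rfl⟩ := ha
  rw [idx, Finset.mem_filter] at hi
  have hdiv := hi.2
  rw [Finset.mem_Ico]
  constructor
  · calc k * t = (i.val / t) * t := by rw [hdiv]
      _ ≤ i.val := Nat.div_mul_le_self _ _
  · have : i.val / t < k + 1 := by omega
    have := (Nat.div_lt_iff_lt_mul ht).mp this
    calc i.val < (k + 1) * t := this
      _ = k * t + t := by ring

lemma card_idx_le {t k : ℕ} (ht : 0 < t) : (idx (q := q) t k).card ≤ t := by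
  have h1 : (idx (q := q) t k).card = ((idx (q := q) t k).image Fin.val).card :=
    (Finset.card_image_of_injective _ Fin.val_injective).symm
  rw [h1]
  calc ((idx (q := q) t k).image Fin.val).card ≤ (Finset.Ico (k * t) (k * t + t)).card :=
        Finset.card_le_card (val_image_idx_subset ht)
    _ = t := by rw [Nat.card_Ico]; omega

lemma card_idx_eq {t k : ℕ} (ht : 0 < t) (hk : 1 ≤ k) (hne : (idx (q := q) t k).Nonempty) :
    (idx (q := q) t (k - 1)).card = t := by
  obtain ⟨i, hi⟩ := hne
  rw [idx, Finset.mem_filter] at hi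
  have hdiv := hi.2
  have hkt_le : k * t ≤ i.val := by
    calc k * t = (i.val / t) * t := by rw [hdiv]
      _ ≤ i.val := Nat.div_mul_le_self _ _
  have himg : (idx (q := q) t (k - 1)).image Fin.val = Finset.Ico ((k-1) * t) ((k-1) * t + t) := by
    apply Finset.Subset.antisymm (val_image_idx_subset ht)
    intro a ha
    rw [Finset.mem_Ico] at ha
    have haq : a < q := by
      have h5 : a < k * t := by
        have : (k - 1) * t + t = k * t := by
          cases k with
          | zero => omega
          | succ k' => simp [Nat.succ_sub_one]; ring
        omega
      exact lt_of_lt_of_le (lt_of_lt_of_le h5 hkt_le) (le_of_lt i.isLt)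
    have hdivA : a / t = k - 1 := by
      apply Nat.div_eq_of_lt_le
      · exact ha.1
      · have : (k - 1) * t + t = (k - 1 + 1) * t := by ring
        omega
    rw [Finset.mem_image]
    refine ⟨⟨a, haq⟩, ?_, rfl⟩
    rw [idx, Finset.mem_filter]
    exact ⟨Finset.mem_univ _, hdivA⟩
  have h1 : (idx (q := q) t (k - 1)).card = ((idx (q := q) t (k - 1)).image Fin.val).card :=
    (Finset.card_image_of_injective _ Fin.val_injective).symm
  rw [h1, himg, Nat.card_Ico]
  omega

lemma blk_frob_le {t k : ℕ} (ht : 0 < t) (hk : 1 ≤ k) (A : Matrix (Fin p) (Fin q) ℝ) :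
    frobNorm (blk A t k)
      ≤ (∑ i ∈ idx (q := q) t (k - 1), Real.sqrt (lam A (sperm A i))) / Real.sqrt t := by
  classical
  by_cases hne : (idx (q := q) t k).Nonempty
  case neg =>
    rw [Finset.not_nonempty_iff_eq_empty] at hne
    unfold blk
    rw [hne]
    simp only [Finset.image_empty]
    have : outerSub A (∅ : Finset (Fin q)) = 0 := by
      unfold outerSub; simp
    rw [this]
    have h0 : frobNorm (0 : Matrix (Fin p) (Fin q) ℝ) = 0 := by
      rw [frobNorm_eq_zero_iff]
    rw [h0]
    apply div_nonneg
    · exact Finset.sum_nonneg fun i _ => Real.sqrt_nonneg _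
    · exact Real.sqrt_nonneg _
  case pos =>
  set W := ∑ i ∈ idx (q := q) t (k - 1), Real.sqrt (lam A (sperm A i)) with hW
  have hWnn : 0 ≤ W := Finset.sum_nonneg fun i _ => Real.sqrt_nonneg _
  have htR : (0:ℝ) < (t : ℝ) := by exact_mod_cast ht
  -- each singular value in block k is dominated by W / t
  have hdom : ∀ i ∈ idx (q := q) t k, Real.sqrt (lam A (sperm A i)) ≤ W / t := by
    intro i hi
    have hcard : (idx (q := q) t (k - 1)).card = t := card_idx_eq ht hk ⟨i, hi⟩
    have heach : ∀ j ∈ idx (q := q) t (k - 1),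
        Real.sqrt (lam A (sperm A i)) ≤ Real.sqrt (lam A (sperm A j)) := by
      intro j hj
      apply Real.sqrt_le_sqrt
      apply sorted_anti
      rw [idx, Finset.mem_filter] at hi hj
      have h1 : j.val < k * t := by
        have hlt : j.val / t < k := by omega
        exact (Nat.div_lt_iff_lt_mul ht).mp hlt
      have h2 : k * t ≤ i.val := by
        calc k * t = (i.val / t) * t := by rw [hi.2]
          _ ≤ i.val := Nat.div_mul_le_self _ _
      exact le_of_lt (by rw [Fin.lt_def]; omega)
    have hsum : (t : ℝ) * Real.sqrt (lam A (sperm A i)) ≤ W := by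
      calc (t : ℝ) * Real.sqrt (lam A (sperm A i))
          = ∑ _j ∈ idx (q := q) t (k - 1), Real.sqrt (lam A (sperm A i)) := by
            rw [Finset.sum_const, hcard, nsmul_eq_mul]
        _ ≤ W := Finset.sum_le_sum heach
    rw [div_eq_inv_mul, ← mul_le_mul_iff_right₀ htR]
    calc (t:ℝ) * Real.sqrt (lam A (sperm A i)) ≤ W := hsum
      _ = (t:ℝ) * ((t:ℝ)⁻¹ * W) := by field_simp
  -- frobenius bound
  have hfrobsq : frobNorm (blk A t k) ^ 2 ≤ W ^ 2 / t := by
    unfold blk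
    rw [frobsq_outer]
    have h1 : ∑ j ∈ (idx (q := q) t k).image (sperm A), lam A j
        = ∑ i ∈ idx (q := q) t k, lam A (sperm A i) :=
      Finset.sum_image (fun x _ y _ h => (sperm A).injective h)
    rw [h1]
    have h2 : ∀ i ∈ idx (q := q) t k, lam A (sperm A i) ≤ (W / t) ^ 2 := by
      intro i hi
      have := hdom i hi
      have hnn := Real.sqrt_nonneg (lam A (sperm A i))
      have heq : Real.sqrt (lam A (sperm A i)) ^ 2 = lam A (sperm A i) :=
        Real.sq_sqrt (lam_nonneg A _)
      nlinarith
    calc ∑ i ∈ idx (q := q) t k, lam A (sperm A i)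
        ≤ ∑ _i ∈ idx (q := q) t k, (W / t) ^ 2 := Finset.sum_le_sum h2
      _ = (idx (q := q) t k).card * (W / t) ^ 2 := by
          rw [Finset.sum_const, nsmul_eq_mul]
      _ ≤ (t : ℝ) * (W / t) ^ 2 := by
          apply mul_le_mul_of_nonneg_right _ (sq_nonneg _)
          exact_mod_cast card_idx_le ht
      _ = W ^ 2 / t := by field_simp
  have hfrob_nn := frobNorm_nonneg (blk A t k)
  have : frobNorm (blk A t k) = Real.sqrt (frobNorm (blk A t k) ^ 2) := by
    rw [Real.sqrt_sq hfrob_nn]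
  rw [this]
  calc Real.sqrt (frobNorm (blk A t k) ^ 2) ≤ Real.sqrt (W ^ 2 / t) :=
        Real.sqrt_le_sqrt hfrobsq
    _ = W / Real.sqrt t := by
        rw [Real.sqrt_div (sq_nonneg W), Real.sqrt_sq hWnn]

lemma blk_tail_sum (A : Matrix (Fin p) (Fin q) ℝ) {t : ℕ} (ht : 0 < t) :
    ∑ k ∈ (Finset.range q).erase 0, frobNorm (blk A t k) ≤ nucNorm A / Real.sqrt t := by
  classical
  have h1 : ∑ k ∈ (Finset.range q).erase 0, frobNorm (blk A t k)
      ≤ ∑ k ∈ (Finset.range q).erase 0,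
          (∑ i ∈ idx (q := q) t (k - 1), Real.sqrt (lam A (sperm A i))) / Real.sqrt t := by
    refine Finset.sum_le_sum fun k hk => ?_
    have hk1 : 1 ≤ k := by
      rw [Finset.mem_erase] at hk
      omega
    exact blk_frob_le ht hk1 A
  set g : ℕ → ℝ := fun m => ∑ i ∈ idx (q := q) t m, Real.sqrt (lam A (sperm A i)) with hg
  have hgnn : ∀ m, 0 ≤ g m := fun m => Finset.sum_nonneg fun i _ => Real.sqrt_nonneg _
  have h2 : ∑ k ∈ (Finset.range q).erase 0, g (k - 1) ≤ nucNorm A := by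
    have hinj : ∀ x ∈ (Finset.range q).erase 0, ∀ y ∈ (Finset.range q).erase 0,
        x - 1 = y - 1 → x = y := by
      intro x hx y hy h
      rw [Finset.mem_erase] at hx hy
      omega
    have himg : ∑ m ∈ ((Finset.range q).erase 0).image (fun k => k - 1), g m
        = ∑ k ∈ (Finset.range q).erase 0, g (k - 1) := Finset.sum_image hinj
    rw [← himg]
    have hsub : ((Finset.range q).erase 0).image (fun k => k - 1) ⊆ Finset.range q := by
      intro m hm
      rw [Finset.mem_image] at hm
      obtain ⟨k, hk, rfl⟩ := hm
      rw [Finset.mem_erase, Finset.mem_range] at hk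
      rw [Finset.mem_range]
      omega
    calc ∑ m ∈ ((Finset.range q).erase 0).image (fun k => k - 1), g m
        ≤ ∑ m ∈ Finset.range q, g m :=
          Finset.sum_le_sum_of_subset_of_nonneg hsub (fun m _ _ => hgnn m)
      _ = nucNorm A := by
          rw [hg]
          have h2' : ∀ i ∈ Finset.univ (α := Fin q), i.val / t ∈ Finset.range q := by
            intro i _
            rw [Finset.mem_range]
            exact lt_of_le_of_lt (Nat.div_le_self _ _) i.isLt
          have h3 := Finset.sum_fiberwise_of_maps_to h2'
            (fun i => Real.sqrt (lam A (sperm A i)))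
          unfold idx
          rw [h3, Equiv.sum_comp (sperm A) (fun j => Real.sqrt (lam A j)), nucNorm_eq]
  calc ∑ k ∈ (Finset.range q).erase 0, frobNorm (blk A t k)
      ≤ ∑ k ∈ (Finset.range q).erase 0, g (k - 1) / Real.sqrt t := h1
    _ = (∑ k ∈ (Finset.range q).erase 0, g (k - 1)) / Real.sqrt t := by
        rw [Finset.sum_div]
    _ ≤ nucNorm A / Real.sqrt t := by
        have hc : (0:ℝ) < Real.sqrt t := Real.sqrt_pos.mpr (by exact_mod_cast ht)
        exact (div_le_div_iff_of_pos_right hc).mpr h2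


lemma arith_cancel {K₁ sR rR δ : ℝ} (hP : 0 < K₁^2 * sR * rR)
    (hstep : K₁^2*(1-δ)^2*(3*sR*rR) ≤ (sR*K₁^2)*(1+δ)^2*(2*rR)) :
    3*(1-δ)^2 ≤ 2*(1+δ)^2 := by
  nlinarith [hstep, hP]

lemma arith_final {δ s6 : ℝ} (h6 : s6^2 = 6)
    (hpos : 0 < (5 - δ - 2*s6)*(5 - δ + 2*s6)) (hkey : 3*(1-δ)^2 ≤ 2*(1+δ)^2) : False := by
  nlinarith [hpos, hkey, h6]

lemma nucNorm_zero : nucNorm (0 : Matrix (Fin p) (Fin q) ℝ) = 0 := by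
  refine le_antisymm ?_ (nucNorm_nonneg _)
  have h := nuc_le_sqrt_rank (0 : Matrix (Fin p) (Fin q) ℝ)
  have hf : frobNorm (0 : Matrix (Fin p) (Fin q) ℝ) = 0 := (frobNorm_eq_zero_iff _).mpr rfl
  rw [hf, mul_zero] at h
  exact h

end ER

set_option maxHeartbeats 1000000 in
theorem exact_recovery_of_weakRIP {N n m : ℕ} (r : ℕ) (hr : 1 ≤ r)
    (Θstar : Matrix (Fin (n + m)) (Fin n) ℝ) (hrank : Θstar.rank = r)
    (Z : Matrix (Fin N) (Fin (n + m)) ℝ)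
    (X : Matrix (Fin N) (Fin n) ℝ) (hX : X = Z * Θstar)
    (K₁ K₂ δ : ℝ) (hK₁ : 0 < K₁) (hK : K₁ ≤ K₂)
    (s : ℕ) (hs : s = if K₁ = K₂ then 1 else ⌊(K₂ / K₁) ^ 2⌋₊ + 1)
    (hδ0 : 0 < δ) (hδ : δ < 5 - 2 * Real.sqrt 6)
    (hRIP : WeakRIP Z n ((2 + 3 * s) * r) δ K₁ K₂)
    (Θhat : Matrix (Fin (n + m)) (Fin n) ℝ)
    (hfeas : Z * Θhat = X) (hnuc : nucNorm Θhat ≤ nucNorm Θstar) :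
    Θhat = Θstar := by
  classical
  by_contra hne
  -- basic numeric facts about δ
  have h6 : (Real.sqrt 6) ^ 2 = 6 := Real.sq_sqrt (by norm_num)
  have h6pos : 0 < Real.sqrt 6 := Real.sqrt_pos.mpr (by norm_num)
  have hδ1 : δ < 1 := by nlinarith
  have h1δ : 0 < 1 - δ := by linarith
  have hs1 : 1 ≤ s := by rw [hs]; split <;> omega
  set t := 3 * s * r with ht'
  have ht : 0 < t := by rw [ht']; positivity
  have hrfacts : r ≤ (2 + 3 * s) * r := Nat.le_mul_of_pos_left r (by omega)
  have hΘne : Θstar ≠ 0 := by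
    intro h
    rw [h, Matrix.rank_zero] at hrank
    omega
  have hfrobΘ : 0 < frobNorm Θstar := by
    rcases lt_or_eq_of_le (ER.frobNorm_nonneg Θstar) with h | h
    · exact h
    · exact absurd ((ER.frobNorm_eq_zero_iff Θstar).mp h.symm) hΘne
  -- rule out N = 0
  rcases Nat.eq_zero_or_pos N with hN0 | hNpos
  · haveI : IsEmpty (Fin N) := ⟨fun i => absurd i.2 (by omega)⟩
    have hZfrob : frobNorm (Z * Θstar) = 0 := by
      unfold frobNorm
      rw [Finset.univ_eq_empty, Finset.sum_empty, Real.sqrt_zero]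
    have hlow := (hRIP Θstar (by rw [hrank]; exact hrfacts)).1
    rw [hZfrob, zero_div] at hlow
    nlinarith [mul_pos (mul_pos hK₁ h1δ) hfrobΘ]
  have hNR : (0:ℝ) < Real.sqrt N := Real.sqrt_pos.mpr (by exact_mod_cast hNpos)
  -- the error matrix
  set Δ := Θhat - Θstar with hΔ
  have hΔne : Δ ≠ 0 := fun h => hne (sub_eq_zero.mp h)
  have hZΔ : Z * Δ = 0 := by
    rw [hΔ, Matrix.mul_sub, hfeas, hX, sub_self]
  set C := ER.Dc Θstar Δ with hC
  set B0 := ER.D0 Θstar Δ with hB0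
  -- nuclear norm comparison
  have hH : Θhat = Θstar + B0 + C := by
    rw [hB0, hC, add_assoc, ER.D0_add_Dc, hΔ]
    abel
  have hcomp : nucNorm C ≤ nucNorm B0 :=
    ER.nuc_compare (ER.thetaH_mul_Dc Θstar Δ) (ER.theta_mul_DcH Θstar Δ) hH hnuc
  -- blocks
  have hrankB0 : B0.rank ≤ 2 * r := by
    have h5 := ER.rank_D0_le Θstar Δ
    rw [hrank] at h5
    rw [hB0]
    omega
  set D1 := ER.blk C t 0 with hD1
  have hrankblk : ∀ k, (ER.blk C t k).rank ≤ t := by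
    intro k
    refine le_trans (ER.rank_outer_le _ _) ?_
    rw [Finset.card_image_of_injective _ (ER.sperm C).injective]
    exact ER.card_idx_le ht
  set Δ01 := B0 + D1 with hΔ01
  have hrank01 : Δ01.rank ≤ (2 + 3 * s) * r := by
    have h1 := ER.rank_matrix_add_le B0 D1
    have h2 : D1.rank ≤ t := by rw [hD1]; exact hrankblk 0
    have h3 : (2 + 3 * s) * r = 2 * r + t := by rw [ht']; ring
    rw [hΔ01]
    omega
  have hn : 0 < n := by
    have := Matrix.rank_le_card_width Θstar
    simp only [Fintype.card_fin] at this
    omega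
  set E := (Finset.range n).erase 0 with hE
  have hsum : ∑ k ∈ Finset.range n, ER.blk C t k = C := ER.sum_blk C ht
  have hsplit : ∑ k ∈ Finset.range n, ER.blk C t k = D1 + ∑ k ∈ E, ER.blk C t k := by
    rw [hE, hD1]
    exact (Finset.add_sum_erase _ _ (Finset.mem_range.mpr hn)).symm
  have h4 : Δ = B0 + C := by rw [hB0, hC, ER.D0_add_Dc]
  have h5 : C = D1 + ∑ k ∈ E, ER.blk C t k := hsum.symm.trans hsplit
  have hdecomp : Δ01 = Δ - ∑ k ∈ E, ER.blk C t k := by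
    rw [hΔ01, h4]
    nth_rewrite 1 [h5]
    abel
  have hZ01 : Z * Δ01 = - ∑ k ∈ E, Z * ER.blk C t k := by
    rw [hdecomp, Matrix.mul_sub, hZΔ, zero_sub, Matrix.mul_sum]
  have hfrob01 : frobNorm (Z * Δ01) ≤ ∑ k ∈ E, frobNorm (Z * ER.blk C t k) := by
    rw [hZ01, ER.frob_neg]
    exact ER.frob_sum_le _ _
  -- RIP applications
  have hlow := (hRIP Δ01 hrank01).1
  have hup : ∀ k ∈ E, frobNorm (Z * ER.blk C t k) / Real.sqrt N
      ≤ K₂ * (1 + δ) * frobNorm (ER.blk C t k) := by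
    intro k _
    refine (hRIP (ER.blk C t k) ?_).2
    refine le_trans (hrankblk k) ?_
    have h3 : (2 + 3 * s) * r = 2 * r + t := by rw [ht']; ring
    omega
  have hK₂pos : 0 < K₂ := lt_of_lt_of_le hK₁ hK
  have h1δpos : (0:ℝ) < 1 + δ := by linarith
  -- the main chain of inequalities
  have hchain : K₁ * (1 - δ) * frobNorm Δ01 ≤ K₂ * (1 + δ) * (nucNorm C / Real.sqrt t) := by
    have e1 : frobNorm (Z * Δ01) / Real.sqrt N
        ≤ (∑ k ∈ E, frobNorm (Z * ER.blk C t k)) / Real.sqrt N :=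
      (div_le_div_iff_of_pos_right hNR).mpr hfrob01
    have e2 : (∑ k ∈ E, frobNorm (Z * ER.blk C t k)) / Real.sqrt N
        = ∑ k ∈ E, frobNorm (Z * ER.blk C t k) / Real.sqrt N := Finset.sum_div _ _ _
    have e3 : ∑ k ∈ E, frobNorm (Z * ER.blk C t k) / Real.sqrt N
        ≤ ∑ k ∈ E, K₂ * (1 + δ) * frobNorm (ER.blk C t k) := Finset.sum_le_sum hup
    have e4 : ∑ k ∈ E, K₂ * (1 + δ) * frobNorm (ER.blk C t k)
        = K₂ * (1 + δ) * ∑ k ∈ E, frobNorm (ER.blk C t k) := by rw [Finset.mul_sum]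
    have e5 : ∑ k ∈ E, frobNorm (ER.blk C t k) ≤ nucNorm C / Real.sqrt t := by
      rw [hE]
      exact ER.blk_tail_sum C ht
    calc K₁ * (1 - δ) * frobNorm Δ01 ≤ frobNorm (Z * Δ01) / Real.sqrt N := hlow
      _ ≤ (∑ k ∈ E, frobNorm (Z * ER.blk C t k)) / Real.sqrt N := e1
      _ = ∑ k ∈ E, frobNorm (Z * ER.blk C t k) / Real.sqrt N := e2
      _ ≤ ∑ k ∈ E, K₂ * (1 + δ) * frobNorm (ER.blk C t k) := e3
      _ = K₂ * (1 + δ) * ∑ k ∈ E, frobNorm (ER.blk C t k) := e4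
      _ ≤ K₂ * (1 + δ) * (nucNorm C / Real.sqrt t) :=
          mul_le_mul_of_nonneg_left e5 (by positivity)
  -- comparison of nuclear and Frobenius norms
  have hpyth : frobNorm B0 ≤ frobNorm Δ01 := by
    rw [hΔ01]
    exact ER.frob_le_of_pyth B0 D1 (ER.finner_D0_outer Θstar Δ _)
  have hnucb : nucNorm B0 ≤ Real.sqrt (2 * (r:ℝ)) * frobNorm Δ01 := by
    calc nucNorm B0 ≤ Real.sqrt (B0.rank) * frobNorm B0 := ER.nuc_le_sqrt_rank B0
      _ ≤ Real.sqrt (2 * (r:ℝ)) * frobNorm Δ01 := by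
          apply mul_le_mul
          · apply Real.sqrt_le_sqrt
            exact_mod_cast hrankB0
          · exact hpyth
          · exact ER.frobNorm_nonneg _
          · exact Real.sqrt_nonneg _
  -- positivity of frobNorm Δ01
  have hF01 : 0 < frobNorm Δ01 := by
    rcases lt_or_eq_of_le (ER.frobNorm_nonneg Δ01) with h | h
    · exact h
    · exfalso
      have h01 : Δ01 = 0 := (ER.frobNorm_eq_zero_iff _).mp h.symm
      have hzero : ER.finner B0 Δ01 = 0 := by
        rw [h01]
        simp [ER.finner]
      have hD1orth : ER.finner B0 D1 = 0 := ER.finner_D0_outer Θstar Δ _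
      have hBB : ER.finner B0 B0 = 0 := by
        have h7 := ER.finner_add_right B0 B0 D1
        rw [← hΔ01, hzero, hD1orth] at h7
        linarith
      have hfB0 : frobNorm B0 = 0 := by
        rw [ER.frobNorm_eq, hBB, Real.sqrt_zero]
      have hB00 : B0 = 0 := (ER.frobNorm_eq_zero_iff _).mp hfB0
      have hnb0 : nucNorm B0 = 0 := by rw [hB00]; exact ER.nucNorm_zero
      have hC0 : C = 0 := ER.eq_zero_of_nucNorm_eq_zero
        (le_antisymm (hcomp.trans hnb0.le) (ER.nucNorm_nonneg C))
      have hΔ0 : Δ = 0 := by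
        rw [← ER.D0_add_Dc Θstar Δ, ← hB0, ← hC, hB00, hC0, add_zero]
      exact hΔne hΔ0
  -- final arithmetic contradiction
  have hsqrtt : (0:ℝ) < Real.sqrt t := Real.sqrt_pos.mpr (by exact_mod_cast ht)
  have hfin : K₁ * (1 - δ) * frobNorm Δ01
      ≤ K₂ * (1 + δ) * (Real.sqrt (2 * (r:ℝ)) * frobNorm Δ01 / Real.sqrt t) := by
    refine le_trans hchain ?_
    refine mul_le_mul_of_nonneg_left ?_ (by positivity)
    exact (div_le_div_iff_of_pos_right hsqrtt).mpr (hcomp.trans hnucb)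
  have hstep1 : K₁ * (1 - δ) ≤ K₂ * (1 + δ) * Real.sqrt (2 * (r:ℝ)) / Real.sqrt t := by
    have heq : K₂ * (1 + δ) * (Real.sqrt (2 * (r:ℝ)) * frobNorm Δ01 / Real.sqrt t)
        = (K₂ * (1 + δ) * Real.sqrt (2 * (r:ℝ)) / Real.sqrt t) * frobNorm Δ01 := by
      ring
    rw [heq] at hfin
    exact (mul_le_mul_iff_left₀ hF01).mp hfin
  have hstep2 : K₁ * (1 - δ) * Real.sqrt t ≤ K₂ * (1 + δ) * Real.sqrt (2 * (r:ℝ)) :=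
    (le_div_iff₀ hsqrtt).mp hstep1
  have h2rsq : (Real.sqrt (2 * (r:ℝ)))^2 = 2 * (r:ℝ) := Real.sq_sqrt (by positivity)
  have htsq : (Real.sqrt ((t:ℕ):ℝ))^2 = ((t:ℕ):ℝ) := Real.sq_sqrt (by positivity)
  have hsq : (K₁ * (1 - δ) * Real.sqrt t)^2 ≤ (K₂ * (1 + δ) * Real.sqrt (2 * (r:ℝ)))^2 :=
    pow_le_pow_left₀ (by positivity) hstep2 2
  have hexp : K₁^2 * (1-δ)^2 * ((t:ℕ):ℝ) ≤ K₂^2 * (1+δ)^2 * (2 * (r:ℝ)) := by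
    rw [mul_pow, mul_pow, mul_pow, mul_pow, htsq, h2rsq] at hsq
    exact hsq
  have hsK : K₂^2 ≤ (s:ℝ) * K₁^2 := by
    rw [hs]
    by_cases hKK : K₁ = K₂
    · rw [if_pos hKK, hKK]
      push_cast
      linarith
    · rw [if_neg hKK, div_pow]
      have hx : K₂^2/K₁^2 < ((⌊K₂^2 / K₁^2⌋₊ + 1 : ℕ) : ℝ) := by
        push_cast
        exact Nat.lt_floor_add_one _
      have hK₁2 : (0:ℝ) < K₁^2 := by positivity
      have h9 := (div_lt_iff₀ hK₁2).mp hx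
      push_cast
      push_cast at h9
      linarith
  have htcast : ((t:ℕ):ℝ) = 3 * (s:ℝ) * (r:ℝ) := by rw [ht']; push_cast; ring
  have hrpos : (0:ℝ) < (r:ℝ) := by exact_mod_cast hr
  have hspos : (0:ℝ) < (s:ℝ) := by exact_mod_cast hs1
  have hkey : 3 * (1-δ)^2 ≤ 2 * (1+δ)^2 := by
    have hP : (0:ℝ) < K₁^2 * (s:ℝ) * (r:ℝ) := by positivity
    have hstep : K₁^2 * (1-δ)^2 * (3 * (s:ℝ) * (r:ℝ)) ≤ ((s:ℝ) * K₁^2) * (1+δ)^2 * (2 * (r:ℝ)) := by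
      calc K₁^2 * (1-δ)^2 * (3 * (s:ℝ) * (r:ℝ)) = K₁^2 * (1-δ)^2 * ((t:ℕ):ℝ) := by
            rw [htcast]
        _ ≤ K₂^2 * (1+δ)^2 * (2 * (r:ℝ)) := hexp
        _ ≤ ((s:ℝ) * K₁^2) * (1+δ)^2 * (2 * (r:ℝ)) := by
            refine mul_le_mul_of_nonneg_right ?_ (by positivity)
            exact mul_le_mul_of_nonneg_right hsK (sq_nonneg _)
    exact ER.arith_cancel hP hstep
  have hpos2 : (0:ℝ) < 5 - δ - 2*Real.sqrt 6 := by linarith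
  have hpos3 : (0:ℝ) < 5 - δ + 2*Real.sqrt 6 := by linarith
  exact ER.arith_final h6 (mul_pos hpos2 hpos3) hkey
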